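/- Let f ∈ ℤ[x] be nonzero of degree d. Then the fixed divisor of f equals the gcd of f evaluated at any d+1 consecutive integers: gcd{ f(n) : n ∈ ℤ } = gcd( f(0), f(1), …, f(d) ). -/

import Mathlib

open Polynomial

private lemma aux9 (m : ℤ) : ∀ d : ℕ, ∀ f : Polynomial ℤ, f.natDegree ≤ d →
    (∀ i : ℕ, i ≤ d → m ∣ f.eval (i : ℤ)) → ∀ n : ℤ, m ∣ f.eval n := by
  intro d
  induction d with
  | zero =>
    intro f hdeg h n
    have hC : f = C (f.coeff 0) := Polynomial.eq_C_of_natDegree_le_zero hdeg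
    have h0 := h 0 le_rfl
    rw [hC] at h0 ⊢
    simpa using h0
  | succ d ih =>
    intro f hdeg h
    set g : Polynomial ℤ := f.comp (X + C 1) - f with hg
    have hevalg : ∀ x : ℤ, g.eval x = f.eval (x + 1) - f.eval x := by
      intro x; simp [hg, eval_comp]
    have hgdeg : g.natDegree ≤ d := by
      by_cases hf0 : f = 0
      · simp [hg, hf0]
      by_cases hg0 : g = 0
      · simp [hg0]
      have hq : (X + C 1 : Polynomial ℤ).natDegree = 1 := by
        simpa using Polynomial.natDegree_X_add_C (1 : ℤ)
      have hcompdeg : (f.comp (X + C 1)).natDegree = f.natDegree := by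
        rw [Polynomial.natDegree_comp, hq, mul_one]
      have hlead : (f.comp (X + C 1)).leadingCoeff = f.leadingCoeff := by
        rw [Polynomial.leadingCoeff_comp (by rw [hq]; norm_num)]
        rw [(Polynomial.monic_X_add_C (1 : ℤ)).leadingCoeff, one_pow, mul_one]
      have hcomp0 : f.comp (X + C 1) ≠ 0 := by
        intro hz
        apply hf0
        have := hlead
        rw [hz, Polynomial.leadingCoeff_zero] at this
        exact Polynomial.leadingCoeff_eq_zero.mp this.symm
      have hdegeq : (f.comp (X + C 1)).degree = f.degree := by
        rw [Polynomial.degree_eq_natDegree hcomp0, Polynomial.degree_eq_natDegree hf0,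
          hcompdeg]
      have hdlt : g.degree < f.degree := by
        have := Polynomial.degree_sub_lt hdegeq hcomp0 hlead
        rwa [hdegeq] at this
      have hnlt : g.natDegree < f.natDegree :=
        Polynomial.natDegree_lt_natDegree hg0 hdlt
      omega
    have hgvals : ∀ i : ℕ, i ≤ d → m ∣ g.eval (i : ℤ) := by
      intro i hi
      rw [hevalg]
      have h1 := h (i + 1) (by omega)
      have h2 := h i (by omega)
      push_cast at h1
      exact dvd_sub h1 h2
    have hgall : ∀ n : ℤ, m ∣ g.eval n := ih g hgdeg hgvals
    intro n
    induction n using Int.induction_on with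
    | zero => exact h 0 (by omega)
    | succ k hk =>
      have e : f.eval ((k : ℤ) + 1) = f.eval (k : ℤ) + g.eval (k : ℤ) := by
        rw [hevalg]; ring
      rw [e]
      exact dvd_add hk (hgall k)
    | pred k hk =>
      have := dvd_sub hk (hgall (-(k : ℤ) - 1))
      have heq : f.eval (-(k : ℤ) - 1) = f.eval (-(k : ℤ)) - g.eval (-(k : ℤ) - 1) := by
        rw [hevalg]; ring_nf
      rw [heq]
      exact this

/-- The fixed divisor of a nonzero `f ∈ ℤ[x]` of degree `d` equals
`gcd(f(0), f(1), …, f(d))`: an integer `m` divides all values `f(n)` iff `m`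
divides this finite gcd. -/
theorem stmt9 (f : Polynomial ℤ) (hf : f ≠ 0) (d : ℕ) (hd : f.natDegree = d) :
    ∀ m : ℤ, (∀ n : ℤ, m ∣ f.eval n) ↔
      m ∣ (Finset.range (d + 1)).gcd (fun i => f.eval (i : ℤ)) := by
  intro m
  constructor
  · intro h
    exact Finset.dvd_gcd fun i _ => h i
  · intro h
    apply aux9 m d f (le_of_eq hd)
    intro i hi
    exact h.trans (Finset.gcd_dvd (Finset.mem_range.mpr (by omega)))
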